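/- For every odd integer n ≥ 9, the graph on vertices v_1, …, v_n whose edge set consists of: the cycle v_1v_2⋯v_{n−2}v_1; the chord v_1v_3; an edge from v_{n−1} to each of v_1, v_3, v_4, …, v_{n−2}; the three edges v_2v_{n−2}, v_2v_4, v_4v_{n−2}; and an edge from v_n to each of v_4, v_5, …, v_{n−2}, is a Hamiltonian, Eulerian (all degrees even) graph with exactly 3n − 6 edges that is triangle decomposable. -/

import Mathlib

/-- A triangle on three distinct vertices, as a multiset of edges. -/
def IsTriangle {V : Type*} (t : Multiset (Sym2 V)) : Prop :=
  ∃ a b c : V, a ≠ b ∧ b ≠ c ∧ a ≠ c ∧ t = {s(a, b), s(b, c), s(a, c)}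

/-- A multigraph (multiset of edges) is triangle decomposable if it is a sum of triangles. -/
def TriDecomp {V : Type*} (E : Multiset (Sym2 V)) : Prop :=
  ∃ T : Multiset (Multiset (Sym2 V)), (∀ t ∈ T, IsTriangle t) ∧ T.sum = E

/-- The edge multiset of a simple graph on a finite vertex type. -/
noncomputable def edgeMS {V : Type*} [Fintype V] (G : SimpleGraph V) : Multiset (Sym2 V) :=
  G.edgeSet.toFinite.toFinset.val

/-- `ε_Δ(G)`: the least number of duplicated edges of `G` (a multiset of edges of `G`,
repetitions allowed) whose addition makes the edge multiset triangle decomposable. -/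
noncomputable def epsDelta {V : Type*} [Fintype V] (G : SimpleGraph V) : ℕ :=
  sInf {k | ∃ D : Multiset (Sym2 V), D.card = k ∧ (∀ e ∈ D, e ∈ G.edgeSet) ∧
    TriDecomp (edgeMS G + D)}

/-- The graph on vertices `v_1, …, v_n` (zero-indexed: `v_i` is `i - 1 : Fin n`) whose
edges are: the cycle `v_1 v_2 ⋯ v_{n-2} v_1`; the chord `v_1 v_3`; an edge from `v_{n-1}`
to each of `v_1, v_3, v_4, …, v_{n-2}`; the edges `v_2 v_{n-2}`, `v_2 v_4`, `v_4 v_{n-2}`;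
and an edge from `v_n` to each of `v_4, v_5, …, v_{n-2}`. -/
def oddMaxPlanar (n : ℕ) (hn : 9 ≤ n) : SimpleGraph (Fin n) :=
  SimpleGraph.fromEdgeSet
    {e | (∃ i : ℕ, ∃ _h : i + 1 ≤ n - 3, e = s(⟨i, by omega⟩, ⟨i + 1, by omega⟩)) ∨
         e = s(⟨n - 3, by omega⟩, ⟨0, by omega⟩) ∨
         e = s(⟨0, by omega⟩, ⟨2, by omega⟩) ∨
         e = s(⟨n - 2, by omega⟩, ⟨0, by omega⟩) ∨
         (∃ j : ℕ, ∃ _h1 : 2 ≤ j, ∃ _h2 : j ≤ n - 3,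
            e = s(⟨n - 2, by omega⟩, ⟨j, by omega⟩)) ∨
         e = s(⟨1, by omega⟩, ⟨n - 3, by omega⟩) ∨
         e = s(⟨1, by omega⟩, ⟨3, by omega⟩) ∨
         e = s(⟨3, by omega⟩, ⟨n - 3, by omega⟩) ∨
         (∃ j : ℕ, ∃ _h1 : 3 ≤ j, ∃ _h2 : j ≤ n - 3,
            e = s(⟨n - 1, by omega⟩, ⟨j, by omega⟩))}


/-- vertex `i mod n` of `Fin n` -/
def Vtx (n : ℕ) (hn : 0 < n) (i : ℕ) : Fin n := ⟨i % n, Nat.mod_lt _ hn⟩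

lemma Vtx_val {n : ℕ} (hn : 0 < n) {i : ℕ} (h : i < n) : (Vtx n hn i).val = i := by
  simp [Vtx, Nat.mod_eq_of_lt h]

lemma Vtx_self {n : ℕ} (hn : 0 < n) (u : Fin n) : Vtx n hn u.val = u := by
  apply Fin.ext; simp [Vtx, Nat.mod_eq_of_lt u.isLt]

lemma Vtx_inj {n : ℕ} (hn : 0 < n) {a b : ℕ} (ha : a < n) (hb : b < n) :
    Vtx n hn a = Vtx n hn b ↔ a = b := by
  rw [Fin.ext_iff, Vtx_val hn ha, Vtx_val hn hb]

lemma Vs2 {n : ℕ} (hn : 0 < n) {a b c d : ℕ} (ha : a < n) (hb : b < n) (hc : c < n)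
    (hd : d < n) : s(Vtx n hn a, Vtx n hn b) = s(Vtx n hn c, Vtx n hn d) ↔
      (a = c ∧ b = d) ∨ (a = d ∧ b = c) := by
  rw [Sym2.eq_iff, Vtx_inj hn ha hc, Vtx_inj hn hb hd, Vtx_inj hn ha hd, Vtx_inj hn hb hc]

lemma Vmem {n : ℕ} (hn : 0 < n) {a b : ℕ} (ha : a < n) (hb : b < n) (v : Fin n) :
    v ∈ s(Vtx n hn a, Vtx n hn b) ↔ v.val = a ∨ v.val = b := by
  rw [Sym2.mem_iff]
  constructor
  · rintro (rfl | rfl) <;> simp [Vtx_val hn, ha, hb]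
  · rintro (h | h)
    · left; apply Fin.ext; rw [Vtx_val hn ha, h]
    · right; apply Fin.ext; rw [Vtx_val hn hb, h]

def vK (K i : ℕ) : Fin (2*K+5) := Vtx (2*K+5) (by omega) i

lemma vK_val {K i : ℕ} (h : i < 2*K+5) : (vK K i).val = i := Vtx_val _ h

/-- triangle on labels a b c -/
def triK (K a b c : ℕ) : Multiset (Sym2 (Fin (2*K+5))) :=
  {s(vK K a, vK K b), s(vK K b, vK K c), s(vK K a, vK K c)}

lemma triK_isTriangle {K a b c : ℕ} (ha : a < 2*K+5) (hb : b < 2*K+5) (hc : c < 2*K+5)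
    (hab : a ≠ b) (hbc : b ≠ c) (hac : a ≠ c) : IsTriangle (triK K a b c) := by
  refine ⟨vK K a, vK K b, vK K c, ?_, ?_, ?_, rfl⟩ <;>
    simp [Fin.ext_iff, vK_val, ha, hb, hc, hab, hbc, hac]

lemma mem_triK {K a b c x y : ℕ} (ha : a < 2*K+5) (hb : b < 2*K+5) (hc : c < 2*K+5)
    (hx : x < 2*K+5) (hy : y < 2*K+5) :
    s(vK K x, vK K y) ∈ triK K a b c ↔
      ((x = a ∧ y = b) ∨ (x = b ∧ y = a)) ∨ ((x = b ∧ y = c) ∨ (x = c ∧ y = b)) ∨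
      ((x = a ∧ y = c) ∨ (x = c ∧ y = a)) := by
  have h0 : (0:ℕ) < 2*K+5 := by omega
  simp only [triK, vK, Multiset.insert_eq_cons, Multiset.mem_cons, Multiset.mem_singleton,
    Vs2 h0 hx hy ha hb, Vs2 h0 hx hy hb hc, Vs2 h0 hx hy ha hc]

lemma triK_nodup {K a b c : ℕ} (ha : a < 2*K+5) (hb : b < 2*K+5) (hc : c < 2*K+5)
    (hab : a ≠ b) (hbc : b ≠ c) (hac : a ≠ c) : (triK K a b c).Nodup := by
  have h0 : (0:ℕ) < 2*K+5 := by omega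
  simp only [triK, vK, Multiset.insert_eq_cons, Multiset.nodup_cons, Multiset.mem_cons,
    Multiset.mem_singleton, Multiset.nodup_singleton, and_true,
    Vs2 h0 ha hb hb hc, Vs2 h0 ha hb ha hc, Vs2 h0 hb hc ha hc]
  omega

lemma mem_triK_elim {K a b c : ℕ} {e : Sym2 (Fin (2*K+5))} (h : e ∈ triK K a b c) :
    e = s(vK K a, vK K b) ∨ e = s(vK K b, vK K c) ∨ e = s(vK K a, vK K c) := by
  simpa only [triK, Multiset.insert_eq_cons, Multiset.mem_cons, Multiset.mem_singleton] using h

/-- the triangle decomposition -/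
def TT (K : ℕ) : Multiset (Multiset (Sym2 (Fin (2*K+5)))) :=
  triK K 0 1 2 ::ₘ triK K 0 (2*K+2) (2*K+3) ::ₘ triK K 1 3 (2*K+2) ::ₘ
  ((Multiset.range K).map (fun k => triK K (2*K+3) (2*k+2) (2*k+3)) +
   (Multiset.range K).map (fun k => triK K (2*K+4) (2*k+3) (2*k+4)))

lemma TT_card (K : ℕ) : Multiset.card (TT K) = 2*K + 3 := by
  simp [TT]; omega

lemma TT_isTriangle {K : ℕ} (hK : 2 ≤ K) : ∀ t ∈ TT K, IsTriangle t := by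
  intro t ht
  simp only [TT, Multiset.mem_cons, Multiset.mem_add, Multiset.mem_map,
    Multiset.mem_range] at ht
  rcases ht with rfl | rfl | rfl | ⟨k, hk, rfl⟩ | ⟨k, hk, rfl⟩ <;>
    exact triK_isTriangle (by omega) (by omega) (by omega) (by omega) (by omega) (by omega)

lemma TT_sum (K : ℕ) : (TT K).sum =
    triK K 0 1 2 + triK K 0 (2*K+2) (2*K+3) + triK K 1 3 (2*K+2) +
    (Multiset.range K).bind (fun k => triK K (2*K+3) (2*k+2) (2*k+3)) +
    (Multiset.range K).bind (fun k => triK K (2*K+4) (2*k+3) (2*k+4)) := by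
  simp only [TT, Multiset.sum_cons, Multiset.sum_add]
  have : ∀ (f : ℕ → Multiset (Sym2 (Fin (2*K+5)))) (s : Multiset ℕ),
      (s.map f).sum = s.bind f := fun f s => rfl
  rw [this, this]
  abel

def ERel (n a b : ℕ) : Prop :=
  (b = a + 1 ∧ b ≤ n - 3) ∨ (a = n - 3 ∧ b = 0) ∨ (a = 0 ∧ b = 2) ∨
  (a = n - 2 ∧ b = 0) ∨ (a = n - 2 ∧ 2 ≤ b ∧ b ≤ n - 3) ∨ (a = 1 ∧ b = n - 3) ∨
  (a = 1 ∧ b = 3) ∨ (a = 3 ∧ b = n - 3) ∨ (a = n - 1 ∧ 3 ≤ b ∧ b ≤ n - 3)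

lemma er1 {n a b : ℕ} (h : b = a + 1 ∧ b ≤ n - 3) : ERel n a b := Or.inl h
lemma er2 {n a b : ℕ} (h : a = n - 3 ∧ b = 0) : ERel n a b := Or.inr (Or.inl h)
lemma er3 {n a b : ℕ} (h : a = 0 ∧ b = 2) : ERel n a b := Or.inr (Or.inr (Or.inl h))
lemma er4 {n a b : ℕ} (h : a = n - 2 ∧ b = 0) : ERel n a b := Or.inr (Or.inr (Or.inr (Or.inl h)))
lemma er5 {n a b : ℕ} (h : a = n - 2 ∧ 2 ≤ b ∧ b ≤ n - 3) : ERel n a b :=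
  Or.inr (Or.inr (Or.inr (Or.inr (Or.inl h))))
lemma er6 {n a b : ℕ} (h : a = 1 ∧ b = n - 3) : ERel n a b :=
  Or.inr (Or.inr (Or.inr (Or.inr (Or.inr (Or.inl h)))))
lemma er7 {n a b : ℕ} (h : a = 1 ∧ b = 3) : ERel n a b :=
  Or.inr (Or.inr (Or.inr (Or.inr (Or.inr (Or.inr (Or.inl h))))))
lemma er8 {n a b : ℕ} (h : a = 3 ∧ b = n - 3) : ERel n a b :=
  Or.inr (Or.inr (Or.inr (Or.inr (Or.inr (Or.inr (Or.inr (Or.inl h)))))))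
lemma er9 {n a b : ℕ} (h : a = n - 1 ∧ 3 ≤ b ∧ b ≤ n - 3) : ERel n a b :=
  Or.inr (Or.inr (Or.inr (Or.inr (Or.inr (Or.inr (Or.inr (Or.inr h)))))))

set_option maxHeartbeats 4000000 in
lemma mem_TT_sum {K : ℕ} (hK : 2 ≤ K) (u v : Fin (2*K+5)) :
    s(u, v) ∈ (TT K).sum ↔ ERel (2*K+5) u.val v.val ∨ ERel (2*K+5) v.val u.val := by
  have hu := u.isLt; have hv := v.isLt
  have h0 : (0:ℕ) < 2*K+5 := by omega
  have hself : ∀ w : Fin (2*K+5), vK K w.val = w := fun w => Vtx_self h0 w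
  conv_lhs => rw [← hself u, ← hself v]
  rw [TT_sum]
  simp only [Multiset.mem_add, Multiset.mem_bind, Multiset.mem_range]
  constructor
  · rintro ((((h | h) | h) | ⟨k, hk, h⟩) | ⟨k, hk, h⟩) <;>
      rw [mem_triK (by omega) (by omega) (by omega) (by omega) (by omega)] at h <;>
      rcases h with (h | h) | (h | h) | (h | h)
    · exact Or.inl (er1 (by omega))
    · exact Or.inr (er1 (by omega))
    · exact Or.inl (er1 (by omega))
    · exact Or.inr (er1 (by omega))
    · exact Or.inl (er3 (by omega))
    · exact Or.inr (er3 (by omega))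
    · exact Or.inr (er2 (by omega))
    · exact Or.inl (er2 (by omega))
    · exact Or.inr (er5 (by omega))
    · exact Or.inl (er5 (by omega))
    · exact Or.inr (er4 (by omega))
    · exact Or.inl (er4 (by omega))
    · exact Or.inl (er7 (by omega))
    · exact Or.inr (er7 (by omega))
    · exact Or.inl (er8 (by omega))
    · exact Or.inr (er8 (by omega))
    · exact Or.inl (er6 (by omega))
    · exact Or.inr (er6 (by omega))
    · exact Or.inl (er5 (by omega))
    · exact Or.inr (er5 (by omega))
    · exact Or.inl (er1 (by omega))
    · exact Or.inr (er1 (by omega))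
    · exact Or.inl (er5 (by omega))
    · exact Or.inr (er5 (by omega))
    · exact Or.inl (er9 (by omega))
    · exact Or.inr (er9 (by omega))
    · exact Or.inl (er1 (by omega))
    · exact Or.inr (er1 (by omega))
    · exact Or.inl (er9 (by omega))
    · exact Or.inr (er9 (by omega))
  · intro h
    simp only [ERel] at h
    -- decide which triangle
    rcases h with (h|h|h|h|h|h|h|h|h) | (h|h|h|h|h|h|h|h|h)
    -- case er1 : v = u+1, v ≤ 2K+2, both orientations
    · by_cases h2 : u.val ≤ 1
      · refine Or.inl (Or.inl (Or.inl (Or.inl ?_)))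
        rw [mem_triK (by omega) (by omega) (by omega) (by omega) (by omega)]; omega
      · rcases Nat.even_or_odd u.val with ⟨c, hc⟩ | ⟨c, hc⟩
        · refine Or.inl (Or.inr ⟨c - 1, by omega, ?_⟩)
          rw [mem_triK (by omega) (by omega) (by omega) (by omega) (by omega)]; omega
        · refine Or.inr ⟨c - 1, by omega, ?_⟩
          rw [mem_triK (by omega) (by omega) (by omega) (by omega) (by omega)]; omega
    · refine Or.inl (Or.inl (Or.inl (Or.inr ?_)))
      rw [mem_triK (by omega) (by omega) (by omega) (by omega) (by omega)]; omega
    · refine Or.inl (Or.inl (Or.inl (Or.inl ?_)))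
      rw [mem_triK (by omega) (by omega) (by omega) (by omega) (by omega)]; omega
    · refine Or.inl (Or.inl (Or.inl (Or.inr ?_)))
      rw [mem_triK (by omega) (by omega) (by omega) (by omega) (by omega)]; omega
    -- er5 : u = n-2 = 2K+3, 2 ≤ v ≤ 2K+2
    · by_cases h2 : v.val = 2*K+2
      · refine Or.inl (Or.inl (Or.inl (Or.inr ?_)))
        rw [mem_triK (by omega) (by omega) (by omega) (by omega) (by omega)]; omega
      · rcases Nat.even_or_odd v.val with ⟨c, hc⟩ | ⟨c, hc⟩
        · refine Or.inl (Or.inr ⟨c - 1, by omega, ?_⟩)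
          rw [mem_triK (by omega) (by omega) (by omega) (by omega) (by omega)]; omega
        · refine Or.inl (Or.inr ⟨c - 1, by omega, ?_⟩)
          rw [mem_triK (by omega) (by omega) (by omega) (by omega) (by omega)]; omega
    · refine Or.inl (Or.inl (Or.inr ?_))
      rw [mem_triK (by omega) (by omega) (by omega) (by omega) (by omega)]; omega
    · refine Or.inl (Or.inl (Or.inr ?_))
      rw [mem_triK (by omega) (by omega) (by omega) (by omega) (by omega)]; omega
    · refine Or.inl (Or.inl (Or.inr ?_))
      rw [mem_triK (by omega) (by omega) (by omega) (by omega) (by omega)]; omega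
    -- er9 : u = n-1 = 2K+4, 3 ≤ v ≤ 2K+2
    · rcases Nat.even_or_odd v.val with ⟨c, hc⟩ | ⟨c, hc⟩
      · refine Or.inr ⟨c - 2, by omega, ?_⟩
        rw [mem_triK (by omega) (by omega) (by omega) (by omega) (by omega)]; omega
      · refine Or.inr ⟨c - 1, by omega, ?_⟩
        rw [mem_triK (by omega) (by omega) (by omega) (by omega) (by omega)]; omega
    -- symmetric orientation (ERel v u)
    · by_cases h2 : v.val ≤ 1
      · refine Or.inl (Or.inl (Or.inl (Or.inl ?_)))
        rw [mem_triK (by omega) (by omega) (by omega) (by omega) (by omega)]; omega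
      · rcases Nat.even_or_odd v.val with ⟨c, hc⟩ | ⟨c, hc⟩
        · refine Or.inl (Or.inr ⟨c - 1, by omega, ?_⟩)
          rw [mem_triK (by omega) (by omega) (by omega) (by omega) (by omega)]; omega
        · refine Or.inr ⟨c - 1, by omega, ?_⟩
          rw [mem_triK (by omega) (by omega) (by omega) (by omega) (by omega)]; omega
    · refine Or.inl (Or.inl (Or.inl (Or.inr ?_)))
      rw [mem_triK (by omega) (by omega) (by omega) (by omega) (by omega)]; omega
    · refine Or.inl (Or.inl (Or.inl (Or.inl ?_)))
      rw [mem_triK (by omega) (by omega) (by omega) (by omega) (by omega)]; omega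
    · refine Or.inl (Or.inl (Or.inl (Or.inr ?_)))
      rw [mem_triK (by omega) (by omega) (by omega) (by omega) (by omega)]; omega
    · by_cases h2 : u.val = 2*K+2
      · refine Or.inl (Or.inl (Or.inl (Or.inr ?_)))
        rw [mem_triK (by omega) (by omega) (by omega) (by omega) (by omega)]; omega
      · rcases Nat.even_or_odd u.val with ⟨c, hc⟩ | ⟨c, hc⟩
        · refine Or.inl (Or.inr ⟨c - 1, by omega, ?_⟩)
          rw [mem_triK (by omega) (by omega) (by omega) (by omega) (by omega)]; omega
        · refine Or.inl (Or.inr ⟨c - 1, by omega, ?_⟩)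
          rw [mem_triK (by omega) (by omega) (by omega) (by omega) (by omega)]; omega
    · refine Or.inl (Or.inl (Or.inr ?_))
      rw [mem_triK (by omega) (by omega) (by omega) (by omega) (by omega)]; omega
    · refine Or.inl (Or.inl (Or.inr ?_))
      rw [mem_triK (by omega) (by omega) (by omega) (by omega) (by omega)]; omega
    · refine Or.inl (Or.inl (Or.inr ?_))
      rw [mem_triK (by omega) (by omega) (by omega) (by omega) (by omega)]; omega
    · rcases Nat.even_or_odd u.val with ⟨c, hc⟩ | ⟨c, hc⟩
      · refine Or.inr ⟨c - 2, by omega, ?_⟩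
        rw [mem_triK (by omega) (by omega) (by omega) (by omega) (by omega)]; omega
      · refine Or.inr ⟨c - 1, by omega, ?_⟩
        rw [mem_triK (by omega) (by omega) (by omega) (by omega) (by omega)]; omega

set_option maxHeartbeats 2000000 in
lemma TT_sum_nodup {K : ℕ} (hK : 2 ≤ K) : (TT K).sum.Nodup := by
  rw [TT_sum]
  have hA : ((Multiset.range K).bind (fun k => triK K (2*K+3) (2*k+2) (2*k+3))).Nodup := by
    rw [Multiset.nodup_bind]
    constructor
    · intro k hk
      rw [Multiset.mem_range] at hk
      exact triK_nodup (by omega) (by omega) (by omega) (by omega) (by omega) (by omega)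
    · refine ⟨List.range K, rfl, List.Pairwise.imp_of_mem ?_ (List.pairwise_lt_range (n := K))⟩
      intro k k' hk hk' hlt
      rw [List.mem_range] at hk hk'
      rw [Function.onFun, Multiset.disjoint_left]
      intro e he1 he2
      rcases mem_triK_elim he1 with rfl | rfl | rfl <;>
        rw [mem_triK (by omega) (by omega) (by omega) (by omega) (by omega)] at he2 <;> omega
  have hB : ((Multiset.range K).bind (fun k => triK K (2*K+4) (2*k+3) (2*k+4))).Nodup := by
    rw [Multiset.nodup_bind]
    constructor
    · intro k hk
      rw [Multiset.mem_range] at hk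
      exact triK_nodup (by omega) (by omega) (by omega) (by omega) (by omega) (by omega)
    · refine ⟨List.range K, rfl, List.Pairwise.imp_of_mem ?_ (List.pairwise_lt_range (n := K))⟩
      intro k k' hk hk' hlt
      rw [List.mem_range] at hk hk'
      rw [Function.onFun, Multiset.disjoint_left]
      intro e he1 he2
      rcases mem_triK_elim he1 with rfl | rfl | rfl <;>
        rw [mem_triK (by omega) (by omega) (by omega) (by omega) (by omega)] at he2 <;> omega
  refine Multiset.nodup_add.2 ⟨Multiset.nodup_add.2 ⟨Multiset.nodup_add.2
    ⟨Multiset.nodup_add.2 ⟨?_, ?_, ?_⟩, ?_, ?_⟩, hA, ?_⟩, hB, ?_⟩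
  · exact triK_nodup (by omega) (by omega) (by omega) (by omega) (by omega) (by omega)
  · exact triK_nodup (by omega) (by omega) (by omega) (by omega) (by omega) (by omega)
  · rw [Multiset.disjoint_left]
    intro e he1 he2
    rcases mem_triK_elim he1 with rfl | rfl | rfl <;>
      rw [mem_triK (by omega) (by omega) (by omega) (by omega) (by omega)] at he2 <;> omega
  · exact triK_nodup (by omega) (by omega) (by omega) (by omega) (by omega) (by omega)
  · rw [Multiset.disjoint_left]
    intro e he1 he2
    rw [Multiset.mem_add] at he1
    rcases he1 with he1 | he1 <;>
      rcases mem_triK_elim he1 with rfl | rfl | rfl <;>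
      rw [mem_triK (by omega) (by omega) (by omega) (by omega) (by omega)] at he2 <;> omega
  · rw [Multiset.disjoint_left]
    intro e he1 he2
    rw [Multiset.mem_bind] at he2
    obtain ⟨k, hk, he2⟩ := he2
    rw [Multiset.mem_range] at hk
    simp only [Multiset.mem_add] at he1
    rcases he1 with (he1 | he1) | he1 <;>
      rcases mem_triK_elim he1 with rfl | rfl | rfl <;>
      rw [mem_triK (by omega) (by omega) (by omega) (by omega) (by omega)] at he2 <;> omega
  · rw [Multiset.disjoint_left]
    intro e he1 he2
    rw [Multiset.mem_bind] at he2
    obtain ⟨k, hk, he2⟩ := he2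
    rw [Multiset.mem_range] at hk
    simp only [Multiset.mem_add, Multiset.mem_bind, Multiset.mem_range] at he1
    rcases he1 with ((he1 | he1) | he1) | ⟨k', hk', he1⟩ <;>
      rcases mem_triK_elim he1 with rfl | rfl | rfl <;>
      rw [mem_triK (by omega) (by omega) (by omega) (by omega) (by omega)] at he2 <;> omega

lemma TT_sum_card {K : ℕ} : Multiset.card (TT K).sum = 6*K + 9 := by
  have hj : (TT K).sum = (TT K).join := rfl
  rw [hj, Multiset.card_join]
  simp only [TT, Multiset.map_cons, Multiset.map_map, Multiset.sum_cons, Multiset.map_add,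
    Multiset.sum_add]
  have h3 : ∀ a b c : ℕ, Multiset.card (triK K a b c) = 3 := fun _ _ _ => rfl
  simp only [h3, Function.comp]
  simp [Multiset.sum_replicate, Multiset.card_range]
  omega

/-- countP of a predicate over a sum of multisets, all even -/
lemma even_countP_sum {α : Type*} (p : α → Prop) [DecidablePred p]
    (S : Multiset (Multiset α)) (h : ∀ t ∈ S, Even (Multiset.countP p t)) :
    Even (Multiset.countP p S.sum) := by
  induction S using Multiset.induction with
  | empty => simp
  | cons a s ih =>
    rw [Multiset.sum_cons, Multiset.countP_add]
    exact (h a (Multiset.mem_cons_self a s)).add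
      (ih fun t ht => h t (Multiset.mem_cons_of_mem ht))

lemma even_countP_triangle {V : Type*} (v : V) [DecidableEq V]
    {t : Multiset (Sym2 V)} (ht : IsTriangle t) :
    Even (Multiset.countP (fun e => v ∈ e) t) := by
  obtain ⟨a, b, c, hab, hbc, hac, rfl⟩ := ht
  simp only [Multiset.insert_eq_cons, ← Multiset.cons_zero (s(a,c)), Multiset.countP_cons,
    Multiset.countP_zero, Sym2.mem_iff]
  by_cases ha : v = a <;> by_cases hb : v = b <;> by_cases hc : v = c <;>
    subst_vars <;> simp_all [Ne.symm]



lemma adj_iff {n : ℕ} (hn : 9 ≤ n) (u v : Fin n) :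
    (oddMaxPlanar n hn).Adj u v ↔ ERel n u.val v.val ∨ ERel n v.val u.val := by
  have hu := u.isLt; have hv := v.isLt
  rw [oddMaxPlanar, SimpleGraph.fromEdgeSet_adj, Set.mem_setOf_eq]
  constructor
  · rintro ⟨hm, hne⟩
    have hne' : u.val ≠ v.val := fun hx => hne (Fin.ext hx)
    simp only [Sym2.eq_iff, Fin.ext_iff] at hm
    rcases hm with ⟨i, hi, h | h⟩ | (h | h) | (h | h) | (h | h) | ⟨j, hj1, hj2, h | h⟩ |
      (h | h) | (h | h) | (h | h) | ⟨j, hj1, hj2, h | h⟩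
    · exact Or.inl (er1 (by omega))
    · exact Or.inr (er1 (by omega))
    · exact Or.inl (er2 (by omega))
    · exact Or.inr (er2 (by omega))
    · exact Or.inl (er3 (by omega))
    · exact Or.inr (er3 (by omega))
    · exact Or.inl (er4 (by omega))
    · exact Or.inr (er4 (by omega))
    · exact Or.inl (er5 (by omega))
    · exact Or.inr (er5 (by omega))
    · exact Or.inl (er6 (by omega))
    · exact Or.inr (er6 (by omega))
    · exact Or.inl (er7 (by omega))
    · exact Or.inr (er7 (by omega))
    · exact Or.inl (er8 (by omega))
    · exact Or.inr (er8 (by omega))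
    · exact Or.inl (er9 (by omega))
    · exact Or.inr (er9 (by omega))
  · intro h
    refine ⟨?_, fun hx => ?_⟩
    swap
    · rw [Fin.ext_iff] at hx
      rcases h with h | h <;> simp only [ERel] at h <;> omega
    simp only [Sym2.eq_iff, Fin.ext_iff]
    rcases h with (h|h|h|h|h|h|h|h|h) | (h|h|h|h|h|h|h|h|h)
    · exact Or.inl ⟨u.val, by omega, Or.inl ⟨by omega, by omega⟩⟩
    · exact Or.inr (Or.inl (Or.inl ⟨by omega, by omega⟩))
    · exact Or.inr (Or.inr (Or.inl (Or.inl ⟨by omega, by omega⟩)))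
    · exact Or.inr (Or.inr (Or.inr (Or.inl (Or.inl ⟨by omega, by omega⟩))))
    · exact Or.inr (Or.inr (Or.inr (Or.inr (Or.inl ⟨v.val, by omega, by omega,
        Or.inl ⟨by omega, by omega⟩⟩))))
    · exact Or.inr (Or.inr (Or.inr (Or.inr (Or.inr (Or.inl (Or.inl ⟨by omega, by omega⟩))))))
    · exact Or.inr (Or.inr (Or.inr (Or.inr (Or.inr (Or.inr (Or.inl (Or.inl ⟨by omega, by omega⟩)))))))
    · exact Or.inr (Or.inr (Or.inr (Or.inr (Or.inr (Or.inr (Or.inr (Or.inl (Or.inl ⟨by omega, by omega⟩))))))))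
    · exact Or.inr (Or.inr (Or.inr (Or.inr (Or.inr (Or.inr (Or.inr (Or.inr ⟨v.val, by omega, by omega, Or.inl ⟨by omega, by omega⟩⟩)))))))
    · exact Or.inl ⟨v.val, by omega, Or.inr ⟨by omega, by omega⟩⟩
    · exact Or.inr (Or.inl (Or.inr ⟨by omega, by omega⟩))
    · exact Or.inr (Or.inr (Or.inl (Or.inr ⟨by omega, by omega⟩)))
    · exact Or.inr (Or.inr (Or.inr (Or.inl (Or.inr ⟨by omega, by omega⟩))))
    · exact Or.inr (Or.inr (Or.inr (Or.inr (Or.inl ⟨u.val, by omega, by omega, Or.inr ⟨by omega, by omega⟩⟩))))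
    · exact Or.inr (Or.inr (Or.inr (Or.inr (Or.inr (Or.inl (Or.inr ⟨by omega, by omega⟩))))))
    · exact Or.inr (Or.inr (Or.inr (Or.inr (Or.inr (Or.inr (Or.inl (Or.inr ⟨by omega, by omega⟩)))))))
    · exact Or.inr (Or.inr (Or.inr (Or.inr (Or.inr (Or.inr (Or.inr (Or.inl (Or.inr ⟨by omega, by omega⟩))))))))
    · exact Or.inr (Or.inr (Or.inr (Or.inr (Or.inr (Or.inr (Or.inr (Or.inr ⟨u.val, by omega, by omega, Or.inr ⟨by omega, by omega⟩⟩)))))))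


open SimpleGraph in
lemma cycAdj {n : ℕ} (hn : 2 ≤ n) {k : ℕ} (h : k + 1 ≤ n - 1) :
    (cycleGraph n).Adj (Vtx n (by omega) k) (Vtx n (by omega) (k+1)) := by
  rw [SimpleGraph.cycleGraph_adj']
  right
  rw [Fin.sub_def]
  simp only [Vtx_val (by omega : 0 < n) (by omega : k < n),
    Vtx_val (by omega : 0 < n) (by omega : k+1 < n)]
  show (n - k + (k+1)) % n = 1
  rw [show n - k + (k+1) = n + 1 by omega, Nat.add_mod_left, Nat.mod_eq_of_lt (by omega)]

open SimpleGraph in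
lemma cycAdj_last {n : ℕ} (hn : 2 ≤ n) :
    (cycleGraph n).Adj (Vtx n (by omega) (n-1)) (Vtx n (by omega) 0) := by
  rw [SimpleGraph.cycleGraph_adj']
  right
  rw [Fin.sub_def]
  simp only [Vtx_val (by omega : 0 < n) (by omega : n-1 < n),
    Vtx_val (by omega : 0 < n) (by omega : 0 < n)]
  show (n - (n-1) + 0) % n = 1
  rw [show n - (n-1) + 0 = 1 by omega, Nat.mod_eq_of_lt (by omega)]

/-- the increasing walk from `k` to `n-1` in the cycle graph -/
def upWalk (n : ℕ) (hn : 2 ≤ n) : (d : ℕ) → (k : ℕ) → (hk : k + d = n - 1) →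
    (SimpleGraph.cycleGraph n).Walk (Vtx n (by omega) k) (Vtx n (by omega) (n-1))
  | 0, k, hk => SimpleGraph.Walk.nil.copy (by rw [show k = n-1 by omega]) rfl
  | d+1, k, hk => SimpleGraph.Walk.cons (cycAdj hn (by omega)) (upWalk n hn d (k+1) (by omega))

lemma upWalk_support (n : ℕ) (hn : 2 ≤ n) (d : ℕ) : ∀ (k : ℕ) (hk : k + d = n - 1),
    (upWalk n hn d k hk).support = (List.range' k (d+1)).map (Vtx n (by omega)) := by
  induction d with
  | zero =>
    intro k hk
    simp [upWalk, SimpleGraph.Walk.support_copy]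
    exact (Vtx_inj (by omega) (by omega) (by omega)).2 (by omega) |>.symm
  | succ d ih =>
    intro k hk
    rw [upWalk, SimpleGraph.Walk.support_cons, ih (k+1) (by omega)]
    conv_rhs => rw [List.range'_succ, List.map_cons]

lemma upWalk_edges (n : ℕ) (hn : 2 ≤ n) (d : ℕ) : ∀ (k : ℕ) (hk : k + d = n - 1),
    (upWalk n hn d k hk).edges =
      (List.range' k d).map (fun j => s(Vtx n (by omega) j, Vtx n (by omega) (j+1))) := by
  induction d with
  | zero => intro k hk; simp [upWalk]
  | succ d ih =>
    intro k hk
    rw [upWalk, SimpleGraph.Walk.edges_cons, ih (k+1) (by omega)]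
    conv_rhs => rw [List.range'_succ, List.map_cons]

open SimpleGraph in
lemma cycleGraph_hamiltonian {n : ℕ} (hn : 3 ≤ n) :
    ∃ (u : Fin n) (p : (cycleGraph n).Walk u u), p.IsHamiltonianCycle := by
  have h2 : 2 ≤ n := by omega
  have h0 : (0:ℕ) < n := by omega
  refine ⟨Vtx n h0 (n-1), SimpleGraph.Walk.cons (cycAdj_last h2) (upWalk n h2 (n-1) 0 (by omega)), ?_⟩
  rw [SimpleGraph.Walk.isHamiltonianCycle_iff_isCycle_and_support_count_tail_eq_one]
  constructor
  · rw [SimpleGraph.Walk.cons_isCycle_iff]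
    constructor
    · rw [SimpleGraph.Walk.isPath_def, upWalk_support]
      refine List.Nodup.map_on ?_ List.nodup_range'
      intro x hx y hy hxy
      rw [List.mem_range'_1] at hx hy
      rw [Vtx_inj h0 (by omega) (by omega)] at hxy
      omega
    · rw [upWalk_edges]
      intro hmem
      rw [List.mem_map] at hmem
      obtain ⟨j, hj, hej⟩ := hmem
      rw [List.mem_range'_1] at hj
      rw [Vs2 h0 (by omega) (by omega) (by omega) (by omega)] at hej
      omega
  · intro a
    rw [SimpleGraph.Walk.support_cons, List.tail_cons, upWalk_support]
    refine List.count_eq_one_of_mem ?_ ?_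
    · refine List.Nodup.map_on ?_ List.nodup_range'
      intro x hx y hy hxy
      rw [List.mem_range'_1] at hx hy
      rw [Vtx_inj h0 (by omega) (by omega)] at hxy
      omega
    · rw [List.mem_map]
      exact ⟨a.val, by rw [List.mem_range'_1]; omega, Vtx_self h0 a⟩


def signat (n x : ℕ) : ℕ :=
  if x ≤ 3 then x else if x = 4 then n - 1 else if x ≤ n - 3 then x - 1
  else if x = n - 2 then n - 2 else n - 3

lemma signat_lt {n : ℕ} (hn : 9 ≤ n) {x : ℕ} (hx : x < n) : signat n x < n := by
  unfold signat; split_ifs <;> omega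

def sig (n : ℕ) (hn : 9 ≤ n) (u : Fin n) : Fin n := Vtx n (by omega) (signat n u.val)

lemma sig_val {n : ℕ} (hn : 9 ≤ n) (u : Fin n) : (sig n hn u).val = signat n u.val :=
  Vtx_val _ (signat_lt hn u.isLt)

lemma sig_bij {n : ℕ} (hn : 9 ≤ n) : Function.Bijective (sig n hn) := by
  apply Finite.injective_iff_bijective.mp
  intro u v h
  have hval := congrArg Fin.val h
  rw [sig_val hn, sig_val hn] at hval
  have hu := u.isLt; have hv := v.isLt
  apply Fin.ext
  unfold signat at hval
  split_ifs at hval <;> omega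

lemma sig_adj_succ {n : ℕ} (hn : 9 ≤ n) (u v : Fin n)
    (h : (u.val < n - 1 ∧ v.val = u.val + 1) ∨ (u.val = n - 1 ∧ v.val = 0)) :
    (oddMaxPlanar n hn).Adj (sig n hn u) (sig n hn v) := by
  rw [adj_iff hn]
  have hu := u.isLt; have hv := v.isLt
  rw [sig_val hn, sig_val hn]
  rcases h with ⟨h1, h2⟩ | ⟨h1, h2⟩
  · by_cases c1 : u.val ≤ 2
    · have e1 : signat n u.val = u.val := by unfold signat; split_ifs <;> omega
      have e2 : signat n v.val = v.val := by unfold signat; split_ifs <;> omega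
      exact Or.inl (er1 (by omega))
    · by_cases c2 : u.val = 3
      · have e1 : signat n u.val = 3 := by unfold signat; split_ifs <;> omega
        have e2 : signat n v.val = n - 1 := by unfold signat; split_ifs <;> omega
        exact Or.inr (er9 (by omega))
      · by_cases c3 : u.val = 4
        · have e1 : signat n u.val = n - 1 := by unfold signat; split_ifs <;> omega
          have e2 : signat n v.val = 4 := by unfold signat; split_ifs <;> omega
          exact Or.inl (er9 (by omega))
        · by_cases c4 : u.val ≤ n - 4
          · have e1 : signat n u.val = u.val - 1 := by unfold signat; split_ifs <;> omega
            have e2 : signat n v.val = v.val - 1 := by unfold signat; split_ifs <;> omega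
            exact Or.inl (er1 (by omega))
          · by_cases c5 : u.val = n - 3
            · have e1 : signat n u.val = n - 4 := by unfold signat; split_ifs <;> omega
              have e2 : signat n v.val = n - 2 := by unfold signat; split_ifs <;> omega
              exact Or.inr (er5 (by omega))
            · have c6 : u.val = n - 2 := by omega
              have e1 : signat n u.val = n - 2 := by unfold signat; split_ifs <;> omega
              have e2 : signat n v.val = n - 3 := by unfold signat; split_ifs <;> omega
              exact Or.inl (er5 (by omega))
  · have e1 : signat n u.val = n - 3 := by unfold signat; split_ifs <;> omega
    have e2 : signat n v.val = 0 := by unfold signat; split_ifs <;> omega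
    exact Or.inl (er2 (by omega))

lemma fin_succ_cases {n : ℕ} (hn : 2 ≤ n) (u v : Fin n) (h : (v - u).val = 1) :
    (u.val < n - 1 ∧ v.val = u.val + 1) ∨ (u.val = n - 1 ∧ v.val = 0) := by
  have hu := u.isLt; have hv := v.isLt
  rw [Fin.sub_def] at h
  simp only at h
  rcases Nat.lt_or_ge (n - u.val + v.val) n with hc | hc
  · rw [Nat.mod_eq_of_lt hc] at h; omega
  · rw [Nat.mod_eq_sub_mod hc, Nat.mod_eq_of_lt (by omega)] at h; omega

lemma oddMaxPlanar_isHamiltonian {n : ℕ} (hn : 9 ≤ n) :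
    (oddMaxPlanar n hn).IsHamiltonian := by
  intro _
  obtain ⟨u, p, hp⟩ := cycleGraph_hamiltonian (n := n) (by omega)
  refine ⟨sig n hn u, p.map ⟨sig n hn, ?_⟩, hp.map (sig_bij hn)⟩
  intro a b hab
  rw [SimpleGraph.cycleGraph_adj'] at hab
  rcases hab with h | h
  · exact (sig_adj_succ hn b a (fin_succ_cases (by omega) b a h)).symm
  · exact sig_adj_succ hn a b (fin_succ_cases (by omega) a b h)

lemma ncard_eq_countP {V : Type*} [Fintype V] [DecidableEq V] (G : SimpleGraph V) (v : V)
    [DecidablePred (fun e : Sym2 V => v ∈ e)] :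
    (G.neighborSet v).ncard = Multiset.countP (fun e => v ∈ e) (edgeMS G) := by
  rw [Multiset.countP_eq_card_filter]
  have hinj : Function.Injective (fun w : V => s(v, w)) := fun a b h => by
    rwa [Sym2.congr_right] at h
  have key : (edgeMS G).filter (fun e => v ∈ e) =
      ((G.neighborSet v).toFinite.toFinset.val).map (fun w => s(v, w)) := by
    refine (Multiset.Nodup.ext ((Finset.nodup _).filter _)
      (Multiset.Nodup.map hinj (Finset.nodup _))).mpr ?_
    intro e
    rw [Multiset.mem_filter, Multiset.mem_map]
    constructor
    · rintro ⟨he, hv⟩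
      obtain ⟨w, rfl⟩ := Sym2.mem_iff_exists.mp hv
      refine ⟨w, ?_, rfl⟩
      rw [Finset.mem_val, Set.Finite.mem_toFinset] at he ⊢
      exact (SimpleGraph.mem_edgeSet G).mp he
    · rintro ⟨w, hw, rfl⟩
      rw [Finset.mem_val, Set.Finite.mem_toFinset] at hw
      refine ⟨?_, Sym2.mem_mk_left v w⟩
      rw [Finset.mem_val, Set.Finite.mem_toFinset]
      exact hw
  rw [key, Multiset.card_map, Set.ncard_eq_toFinset_card (G.neighborSet v)
    (G.neighborSet v).toFinite]
  rfl

theorem oddMaxPlanar_hamiltonian_eulerian_triDecomp (n : ℕ) (hn : 9 ≤ n) (hno : Odd n) :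
    (oddMaxPlanar n hn).IsHamiltonian ∧
    (∀ v, Even (((oddMaxPlanar n hn).neighborSet v).ncard)) ∧
    (edgeMS (oddMaxPlanar n hn)).card = 3 * n - 6 ∧
    TriDecomp (edgeMS (oddMaxPlanar n hn)) := by
  have hham := oddMaxPlanar_isHamiltonian hn
  obtain ⟨K, hK2, rfl⟩ : ∃ K, 2 ≤ K ∧ n = 2 * K + 5 := by
    obtain ⟨j, hj⟩ := hno
    exact ⟨j - 2, by omega, by omega⟩
  have hedge : edgeMS (oddMaxPlanar (2*K+5) hn) = (TT K).sum := by
    refine (Multiset.Nodup.ext (Finset.nodup _) (TT_sum_nodup hK2)).mpr ?_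
    intro e
    induction e using Sym2.ind with
    | _ u v =>
      rw [Finset.mem_val, Set.Finite.mem_toFinset, SimpleGraph.mem_edgeSet,
        adj_iff hn, mem_TT_sum hK2]
  refine ⟨hham, ?_, ?_, ?_⟩
  · intro v
    classical
    rw [ncard_eq_countP, hedge]
    exact even_countP_sum _ _ (fun t ht => even_countP_triangle v (TT_isTriangle hK2 t ht))
  · rw [hedge, TT_sum_card]; omega
  · exact ⟨TT K, TT_isTriangle hK2, hedge.symm⟩
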